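/- Let 𝕜 be ℝ or ℂ, V an inner product space over 𝕜, let φ, ψ : V →ₗ[𝕜] V be finite potent endomorphisms, each with index at most 1, let X be a core inverse of φ, and let μ be a Moore–Penrose inverse of φ. Then: (a) φ ∘ X = ψ ∘ X if and only if φ ∘ φ = ψ ∘ φ; and (b) X ∘ φ = X ∘ ψ if and only if μ ∘ φ = μ ∘ ψ. -/

import Mathlib

theorem core_stmt19 {𝕜 : Type*} [RCLike 𝕜] {V : Type*} [NormedAddCommGroup V]
    [InnerProductSpace 𝕜 V] (φ ψ X μ : V →ₗ[𝕜] V)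
    (hfpφ : ∃ n : ℕ, FiniteDimensional 𝕜 (LinearMap.range (φ ^ n)))
    (hidxφ : IsCompl (LinearMap.range φ) (LinearMap.ker φ))
    (hfpψ : ∃ n : ℕ, FiniteDimensional 𝕜 (LinearMap.range (ψ ^ n)))
    (hidxψ : IsCompl (LinearMap.range ψ) (LinearMap.ker ψ))
    (hX1 : ∀ v : V, v - φ (X v) ∈ (LinearMap.range φ)ᗮ)
    (hX2 : LinearMap.range X ≤ LinearMap.range φ)
    (hmp1 : φ ∘ₗ μ ∘ₗ φ = φ)
    (hmp2 : μ ∘ₗ φ ∘ₗ μ = μ)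
    (hmp3 : ∀ u w : V, (inner 𝕜 ((φ ∘ₗ μ) u) w : 𝕜) = inner 𝕜 u ((φ ∘ₗ μ) w))
    (hmp4 : ∀ u w : V, (inner 𝕜 ((μ ∘ₗ φ) u) w : 𝕜) = inner 𝕜 u ((μ ∘ₗ φ) w)) :
    (φ ∘ₗ X = ψ ∘ₗ X ↔ φ ∘ₗ φ = ψ ∘ₗ φ) ∧
      (X ∘ₗ φ = X ∘ₗ ψ ↔ μ ∘ₗ φ = μ ∘ₗ ψ) := by
  classical
  set W := LinearMap.range φ with hW
  -- map φ W = W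
  have hmapW : Submodule.map φ W = W := by
    have htop : W ⊔ LinearMap.ker φ = ⊤ := codisjoint_iff.mp hidxφ.codisjoint
    have hker0 : Submodule.map φ (LinearMap.ker φ) = ⊥ := by
      apply le_bot_iff.mp
      rintro x ⟨y, hy, rfl⟩
      simpa using hy
    have : Submodule.map φ (W ⊔ LinearMap.ker φ) = Submodule.map φ ⊤ := by rw [htop]
    rw [Submodule.map_sup, hker0, sup_bot_eq, Submodule.map_top] at this
    exact this
  -- range φ is finite dimensional
  have hRφ : FiniteDimensional 𝕜 W := by
    obtain ⟨n, hn⟩ := hfpφ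
    cases n with
    | zero =>
      have hV : FiniteDimensional 𝕜 V := by
        rw [pow_zero] at hn
        have : LinearMap.range (1 : V →ₗ[𝕜] V) = ⊤ := LinearMap.range_eq_top.mpr fun x => ⟨x, rfl⟩
        rw [this] at hn
        exact (Submodule.topEquiv : (⊤ : Submodule 𝕜 V) ≃ₗ[𝕜] V).finiteDimensional
      infer_instance
    | succ m =>
      have hpow : ∀ k : ℕ, LinearMap.range (φ ^ (k + 1)) = W := by
        intro k
        induction k with
        | zero => simp [hW]
        | succ j ih =>
          have : φ ^ (j + 2) = φ ∘ₗ φ ^ (j + 1) := by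
            rw [pow_succ']; rfl
          rw [this, LinearMap.range_comp, ih, hmapW]
      rw [hpow m] at hn
      exact hn
  have hdisj : ∀ x : V, x ∈ W → x ∈ Wᗮ → x = 0 :=
    fun x hx hx' => Submodule.disjoint_def.mp (Submodule.orthogonal_disjoint W) x hx hx'
  -- φ X w = w for w ∈ W
  have hfix : ∀ w ∈ W, φ (X w) = w := by
    intro w hw
    have h2 : w - φ (X w) ∈ W := Submodule.sub_mem W hw (LinearMap.mem_range_self φ (X w))
    have h0 : w - φ (X w) = 0 := hdisj _ h2 (hX1 w)
    have := sub_eq_zero.mp h0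
    exact this.symm
  -- X kills Wᗮ
  have hXorth : ∀ v ∈ Wᗮ, X v = 0 := by
    intro v hv
    have hφXv_orth : φ (X v) ∈ Wᗮ := by
      have heq : φ (X v) = v - (v - φ (X v)) := by abel
      rw [heq]
      exact Submodule.sub_mem _ hv (hX1 v)
    have hφXv0 : φ (X v) = 0 := hdisj _ (LinearMap.mem_range_self φ (X v)) hφXv_orth
    have hker : X v ∈ LinearMap.ker φ := LinearMap.mem_ker.mpr hφXv0
    have hrange : X v ∈ W := hX2 (LinearMap.mem_range_self X v)
    exact Submodule.disjoint_def.mp hidxφ.disjoint _ hrange hker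
  -- X φ X = X
  have hXφX : ∀ v : V, X (φ (X v)) = X v := by
    intro v
    have h0 : X (v - φ (X v)) = 0 := hXorth _ (hX1 v)
    rw [map_sub] at h0
    have := sub_eq_zero.mp h0
    exact this.symm
  -- range X = W
  have hrangeX : W ≤ LinearMap.range X := by
    have hres : ∀ w ∈ W, X w ∈ W := fun w _ => hX2 (LinearMap.mem_range_self X w)
    let g : W →ₗ[𝕜] W := X.restrict hres
    have hginj : Function.Injective g := by
      intro a b hab
      have hXab : X a.val = X b.val := congrArg Subtype.val hab
      apply Subtype.ext
      calc a.val = φ (X a.val) := (hfix a.val a.2).symm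
        _ = φ (X b.val) := by rw [hXab]
        _ = b.val := hfix b.val b.2
    have hgsurj : Function.Surjective g := LinearMap.injective_iff_surjective.mp hginj
    intro w hw
    obtain ⟨u, hu⟩ := hgsurj ⟨w, hw⟩
    exact ⟨u.val, congrArg Subtype.val hu⟩
  -- μ kills Wᗮ
  have hφμφ : ∀ w : V, φ (μ (φ w)) = φ w := fun w => LinearMap.ext_iff.mp hmp1 w
  have hμφμ : ∀ w : V, μ (φ (μ w)) = μ w := fun w => LinearMap.ext_iff.mp hmp2 w
  have hμorth : ∀ v ∈ Wᗮ, μ v = 0 := by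
    intro v hv
    have hφμv : φ (μ v) = 0 := by
      have h1 : (inner 𝕜 (φ (μ v)) (φ (μ v)) : 𝕜) = inner 𝕜 v (φ (μ (φ (μ v)))) := hmp3 v (φ (μ v))
      rw [hφμφ (μ v)] at h1
      have h2 : (inner 𝕜 v (φ (μ v)) : 𝕜) = 0 :=
        inner_eq_zero_symm.mp
          ((Submodule.mem_orthogonal W v).mp hv (φ (μ v)) (LinearMap.mem_range_self φ (μ v)))
      rw [h2] at h1
      exact inner_self_eq_zero.mp h1
    calc μ v = μ (φ (μ v)) := (hμφμ v).symm
      _ = 0 := by rw [hφμv]; simp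
  -- φ μ = φ X
  have hφμX : ∀ v : V, φ (μ v) = φ (X v) := by
    intro v
    have h1 : v - φ (μ v) ∈ Wᗮ := by
      rw [Submodule.mem_orthogonal]
      rintro u ⟨w, rfl⟩
      rw [inner_sub_right]
      have h3 : (inner 𝕜 (φ (μ (φ w))) v : 𝕜) = inner 𝕜 (φ w) (φ (μ v)) := hmp3 (φ w) v
      rw [hφμφ w] at h3
      rw [← h3, sub_self]
    have hdiff : φ (μ v) - φ (X v) ∈ Wᗮ := by
      have heq : φ (μ v) - φ (X v) = (v - φ (X v)) - (v - φ (μ v)) := by abel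
      rw [heq]
      exact Submodule.sub_mem _ (hX1 v) h1
    have hdiffW : φ (μ v) - φ (X v) ∈ W :=
      Submodule.sub_mem W (LinearMap.mem_range_self φ (μ v)) (LinearMap.mem_range_self φ (X v))
    exact sub_eq_zero.mp (hdisj _ hdiffW hdiff)
  constructor
  · constructor
    · intro h
      ext u
      simp only [LinearMap.comp_apply]
      obtain ⟨t, ht⟩ := hrangeX (LinearMap.mem_range_self φ u)
      rw [← ht]
      exact LinearMap.ext_iff.mp h t
    · intro h
      ext v
      simp only [LinearMap.comp_apply]
      obtain ⟨u, hu⟩ := hX2 (LinearMap.mem_range_self X v)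
      rw [← hu]
      exact LinearMap.ext_iff.mp h u
  · constructor
    · intro h
      ext v
      simp only [LinearMap.comp_apply]
      have h1 : φ (X (φ v)) = φ (X (ψ v)) := congrArg φ (LinearMap.ext_iff.mp h v)
      have hφv : φ (X (φ v)) = φ v := hfix _ (LinearMap.mem_range_self φ v)
      have horth : ψ v - φ v ∈ Wᗮ := by
        have := hX1 (ψ v)
        rwa [← h1, hφv] at this
      have h0 : μ (ψ v - φ v) = 0 := hμorth _ horth
      rw [map_sub] at h0
      exact (sub_eq_zero.mp h0).symm
    · intro h
      ext v
      simp only [LinearMap.comp_apply]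
      have h1 : φ (μ (φ v)) = φ (μ (ψ v)) := congrArg φ (LinearMap.ext_iff.mp h v)
      have h2 : φ v = φ (X (ψ v)) := by
        rw [← hφμX (ψ v), ← h1, hφμφ v]
      calc X (φ v) = X (φ (X (ψ v))) := congrArg X h2
        _ = X (ψ v) := hXφX (ψ v)
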